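/- Let k ∈ ℕ and x ∈ ℕ with x < 2^k. Then fP(x, k) = 0 if and only if Φ(x) ≢ x (mod 2^k) (where the natural number x is viewed as an element of ℤ₂). -/

import Mathlib

noncomputable section

/-- The inverse of `3` in the ring of 2-adic integers. -/
def inv3 : ℤ_[2] := Ring.inverse 3

/-- The `j`-th binary digit of a 2-adic integer (as `0` or `1`). -/
def dig (x : ℤ_[2]) (j : ℕ) : ℕ := if Nat.testBit (x.appr (j + 1)) j then 1 else 0

/-- The number of one digits of `x` in positions `< j`. -/
def digCount (x : ℤ_[2]) (j : ℕ) : ℕ := ∑ i ∈ Finset.range j, dig x i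

/-- Bernstein's formula for the 3x+1 conjugacy map `Φ`:
if `x = ∑_i 2^{d_i}` with `d_0 < d_1 < ⋯`, then `Φ x = -∑_i 2^{d_i} 3^{-i}`. -/
def Phi (x : ℤ_[2]) : ℤ_[2] :=
  -∑' j : ℕ, (dig x j : ℤ_[2]) * 2 ^ j * inv3 ^ digCount x j

/-- `L_k(x)`: the unique natural number `< 2^k` congruent to `x` mod `2^k`. -/
def Lk (k : ℕ) (x : ℤ_[2]) : ℕ := x.appr k

theorem two_pow_dvd_sub_appr (k : ℕ) (x : ℤ_[2]) :
    (2 : ℤ_[2]) ^ k ∣ x - (x.appr k : ℤ_[2]) := by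
  have h := PadicInt.appr_spec k x
  rw [Ideal.mem_span_singleton] at h
  exact_mod_cast h

theorem exists_Rk (k : ℕ) (x : ℤ_[2]) :
    ∃ z : ℤ_[2], x = (x.appr k : ℤ_[2]) + 2 ^ k * z := by
  obtain ⟨c, hc⟩ := two_pow_dvd_sub_appr k x
  exact ⟨c, by rw [← hc]; ring⟩

/-- `R_k(x)`: the unique 2-adic integer with `x = L_k(x) + 2^k · R_k(x)`. -/
def Rk (k : ℕ) (x : ℤ_[2]) : ℤ_[2] := (exists_Rk k x).choose

/-- `α(a)`: the number of ones in the binary expansion of `a`. -/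
def alphaNat (a : ℕ) : ℕ := (Nat.bits a).count true

/-- `b̄_{v,∞} = b · ∑_{i=0}^∞ 2^{v i}` as a 2-adic integer. -/
def bbar (b v : ℕ) : ℤ_[2] := (b : ℤ_[2]) * ∑' i : ℕ, (2 : ℤ_[2]) ^ (v * i)

/-- `b̄_{v,t} = b · ∑_{i=0}^{t-1} 2^{v i}` as a natural number. -/
def bbarFin (b v t : ℕ) : ℕ := b * ∑ i ∈ Finset.range t, 2 ^ (v * i)

/-- The farPoint `fP(x,k)`: the least `r` such that no 2-adic congruent to `x`
mod `2^k` is a fixed point of `Φ` mod `2^{k+r}`, and `∞` if no such `r` exists. -/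
def fP (x k : ℕ) : ℕ∞ :=
  sInf ((↑) '' {r : ℕ | ∀ z : ℤ_[2],
    (2 : ℤ_[2]) ^ k ∣ z - (x : ℤ_[2]) → ¬ (2 : ℤ_[2]) ^ (k + r) ∣ Phi z - z})

end


section Aux

lemma two_eq' : (2 : ℤ_[2]) = ((2:ℕ) : ℤ_[2]) := by norm_cast

lemma dvd_iff_norm' (k : ℕ) (y : ℤ_[2]) : (2:ℤ_[2])^k ∣ y ↔ ‖y‖ ≤ (2:ℝ)^(-(k:ℤ)) := by
  have h := PadicInt.norm_le_pow_iff_mem_span_pow (p := 2) y k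
  rw [Ideal.mem_span_singleton] at h
  rw [two_eq']
  exact_mod_cast h.symm

lemma appr_congr' {k m : ℕ} (hm : m ≤ k) {z x : ℤ_[2]} (h : (2:ℤ_[2])^k ∣ z - x) :
    z.appr m = x.appr m := by
  have h1 := PadicInt.appr_spec m z
  have h2 := PadicInt.appr_spec m x
  rw [Ideal.mem_span_singleton] at h1 h2
  have hm' : (2:ℤ_[2])^m ∣ z - x := dvd_trans (pow_dvd_pow _ hm) h
  have hd : (2:ℤ_[2])^m ∣ ((z.appr m : ℤ) - (x.appr m : ℤ) : ℤ) := by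
    push_cast
    have : ((z.appr m : ℤ_[2]) - (x.appr m : ℤ_[2]))
        = -(z - z.appr m) + (z - x) + (x - x.appr m) := by ring
    rw [this]
    exact dvd_add (dvd_add (dvd_neg.2 h1) hm') h2
  rw [two_eq', PadicInt.pow_p_dvd_int_iff] at hd
  have hz : (z.appr m : ℤ) < 2^m := by exact_mod_cast PadicInt.appr_lt z m
  have hx : (x.appr m : ℤ) < 2^m := by exact_mod_cast PadicInt.appr_lt x m
  have h0 : ((z.appr m : ℤ) - (x.appr m : ℤ)) = 0 := by
    refine Int.eq_zero_of_abs_lt_dvd (by exact_mod_cast hd) ?_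
    rw [abs_lt]
    push_cast
    have := Int.natCast_nonneg (z.appr m); have := Int.natCast_nonneg (x.appr m)
    constructor <;> omega
  exact_mod_cast sub_eq_zero.1 h0

lemma dig_congr' {k j : ℕ} (hj : j < k) {z x : ℤ_[2]} (h : (2:ℤ_[2])^k ∣ z - x) :
    dig z j = dig x j := by
  unfold dig
  rw [appr_congr' hj h]

lemma digCount_congr' {k j : ℕ} (hj : j ≤ k) {z x : ℤ_[2]} (h : (2:ℤ_[2])^k ∣ z - x) :
    digCount z j = digCount x j := by
  unfold digCount
  exact Finset.sum_congr rfl fun i hi => dig_congr' (lt_of_lt_of_le (Finset.mem_range.1 hi) hj) h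

lemma norm_two_pow' (j : ℕ) : ‖(2:ℤ_[2])^j‖ = (1/2:ℝ)^j := by
  rw [two_eq']
  have := PadicInt.norm_p_pow (p := 2) j
  push_cast at this ⊢
  rw [this]
  rw [one_div, inv_pow, ← zpow_natCast, ← zpow_neg]

lemma summable_phi' (x : ℤ_[2]) :
    Summable (fun j : ℕ => (dig x j : ℤ_[2]) * 2 ^ j * inv3 ^ digCount x j) := by
  apply Summable.of_norm_bounded (g := fun j => (1/2:ℝ)^j)
    (summable_geometric_of_lt_one (by norm_num) (by norm_num))
  intro j
  calc ‖(dig x j : ℤ_[2]) * 2 ^ j * inv3 ^ digCount x j‖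
      ≤ ‖(dig x j : ℤ_[2]) * 2 ^ j‖ * ‖inv3 ^ digCount x j‖ := norm_mul_le _ _
    _ ≤ (‖(dig x j : ℤ_[2])‖ * ‖(2:ℤ_[2])^j‖) * 1 :=
        mul_le_mul (norm_mul_le _ _) (PadicInt.norm_le_one _) (norm_nonneg _)
          (by positivity)
    _ ≤ (1 * (1/2)^j) * 1 := by
        rw [norm_two_pow']
        gcongr
        exact PadicInt.norm_le_one _
    _ = (1/2)^j := by ring

lemma dvd_tsum' {k : ℕ} {g : ℕ → ℤ_[2]} (hg : Summable g) (h : ∀ j, (2:ℤ_[2])^k ∣ g j) :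
    (2:ℤ_[2])^k ∣ ∑' j, g j := by
  rw [dvd_iff_norm']
  have ht : Filter.Tendsto (fun n => ‖∑ i ∈ Finset.range n, g i‖) Filter.atTop (nhds ‖∑' j, g j‖) :=
    (continuous_norm.tendsto _).comp hg.hasSum.tendsto_sum_nat
  refine le_of_tendsto' ht fun n => ?_
  rw [← dvd_iff_norm']
  exact Finset.dvd_sum fun i _ => h i

lemma phi_congr' {k : ℕ} {z x : ℤ_[2]} (h : (2:ℤ_[2])^k ∣ z - x) :
    (2:ℤ_[2])^k ∣ Phi z - Phi x := by
  unfold Phi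
  have hz := summable_phi' z
  have hx := summable_phi' x
  have : -∑' j : ℕ, (dig z j : ℤ_[2]) * 2 ^ j * inv3 ^ digCount z j -
      -∑' j : ℕ, (dig x j : ℤ_[2]) * 2 ^ j * inv3 ^ digCount x j =
      -∑' j : ℕ, ((dig z j : ℤ_[2]) * 2 ^ j * inv3 ^ digCount z j -
        (dig x j : ℤ_[2]) * 2 ^ j * inv3 ^ digCount x j) := by
    rw [Summable.tsum_sub hz hx]
    ring
  rw [this, dvd_neg]
  refine dvd_tsum' (hz.sub hx) fun j => ?_
  rcases lt_or_ge j k with hj | hj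
  · rw [dig_congr' hj h, digCount_congr' (le_of_lt hj) h, sub_self]
    exact dvd_zero _
  · have h2 : (2:ℤ_[2])^k ∣ (2:ℤ_[2])^j := pow_dvd_pow _ hj
    exact dvd_sub (Dvd.dvd.mul_right (Dvd.dvd.mul_left h2 _) _)
      (Dvd.dvd.mul_right (Dvd.dvd.mul_left h2 _) _)

end Aux

/-- `fP(x,k) = 0` iff `Φ(x) ≢ x (mod 2^k)`. -/
theorem stmt16 (k x : ℕ) (hx : x < 2 ^ k) :
    fP x k = 0 ↔ ¬ (2 : ℤ_[2]) ^ k ∣ Phi (x : ℤ_[2]) - (x : ℤ_[2]) := by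
  constructor
  · intro h0 hdvd
    -- show 0 is in the set, then contradiction at z = x
    by_contra _
    -- in fact derive 0 ∈ the set from sInf = 0
    have hmem : (0 : ℕ∞) ∈ ((↑) '' {r : ℕ | ∀ z : ℤ_[2],
        (2 : ℤ_[2]) ^ k ∣ z - (x : ℤ_[2]) → ¬ (2 : ℤ_[2]) ^ (k + r) ∣ Phi z - z}) := by
      by_contra hnot
      have h1 : (1 : ℕ∞) ≤ fP x k := by
        refine le_sInf fun a ha => ?_
        obtain ⟨r, hr, rfl⟩ := ha
        rcases Nat.eq_zero_or_pos r with rfl | hrpos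
        · exact (hnot ⟨0, hr, by simp⟩).elim
        · exact_mod_cast hrpos
      rw [h0] at h1
      exact absurd h1 (by simp)
    obtain ⟨r, hr, hr0⟩ := hmem
    have hr' : r = 0 := by exact_mod_cast hr0
    subst hr'
    have := hr (x : ℤ_[2]) (by simp)
    rw [add_zero] at this
    exact this hdvd
  · intro hndvd
    have hmem : (0 : ℕ) ∈ {r : ℕ | ∀ z : ℤ_[2],
        (2 : ℤ_[2]) ^ k ∣ z - (x : ℤ_[2]) → ¬ (2 : ℤ_[2]) ^ (k + r) ∣ Phi z - z} := by
      intro z hz hzdvd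
      rw [add_zero] at hzdvd
      apply hndvd
      have hphi : (2:ℤ_[2])^k ∣ Phi z - Phi (x : ℤ_[2]) := phi_congr' hz
      have : Phi (x:ℤ_[2]) - (x:ℤ_[2]) = (Phi z - z) - (Phi z - Phi (x:ℤ_[2])) + (z - (x:ℤ_[2])) := by
        ring
      rw [this]
      exact dvd_add (dvd_sub hzdvd hphi) hz
    refine le_antisymm ?_ zero_le
    exact sInf_le ⟨0, hmem, rfl⟩
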